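/- Let R be a commutative Noetherian ring, f : F → M a flat precover of R-modules, and E an injective cogenerator. If Hom_R(f,E) : Hom_R(M,E) → Hom_R(F,E) is an injective envelope, then f is a flat cover. -/

import Mathlib

universe u

variable (R : Type u) [CommRing R]

/-- A morphism `f : F → M` with `F` flat is a flat precover if every morphism from a
flat module to `M` factors through `f`. -/
def IsFlatPrecover {F M : Type u} [AddCommGroup F] [AddCommGroup M] [Module R F]
    [Module R M] (f : F →ₗ[R] M) : Prop :=
  Module.Flat R F ∧
    ∀ (F' : Type u) [AddCommGroup F'] [Module R F'], Module.Flat R F' →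
      ∀ g : F' →ₗ[R] M, ∃ h : F' →ₗ[R] F, f ∘ₗ h = g

/-- A flat precover `f : F → M` is a flat cover if every `h : F → F` with `f ∘ h = f`
is an automorphism. -/
def IsFlatCover {F M : Type u} [AddCommGroup F] [AddCommGroup M] [Module R F]
    [Module R M] (f : F →ₗ[R] M) : Prop :=
  IsFlatPrecover R f ∧ ∀ h : F →ₗ[R] F, f ∘ₗ h = f → Function.Bijective h

/-- A morphism `i : M → E` is an injective envelope if `E` is injective, `i` is
injective, and the image of `i` is an essential submodule of `E`. -/
def IsInjectiveEnvelope {M E : Type u} [AddCommGroup M] [AddCommGroup E] [Module R M]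
    [Module R E] (i : M →ₗ[R] E) : Prop :=
  Module.Injective R E ∧ Function.Injective i ∧
    ∀ N : Submodule R E, N ≠ ⊥ → N ⊓ LinearMap.range i ≠ ⊥

/-- An injective cogenerator is an injective module `E` such that `Hom(N, E) ≠ 0`
for every nonzero module `N`. -/
def IsInjectiveCogenerator (E : Type u) [AddCommGroup E] [Module R E] : Prop :=
  Module.Injective R E ∧
    ∀ (N : Type u) [AddCommGroup N] [Module R N], (∃ x : N, x ≠ 0) →
      ∃ g : N →ₗ[R] E, g ≠ 0

/-- Over a commutative Noetherian ring, if `f : F → M` is a flat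
precover and `E` is an injective cogenerator such that `Hom_R(f, E)` is an injective
envelope, then `f` is a flat cover. -/
theorem flatCover_of_dual_injectiveEnvelope [IsNoetherianRing R]
    {F M : Type u} [AddCommGroup F] [AddCommGroup M] [Module R F] [Module R M]
    (f : F →ₗ[R] M) (hf : IsFlatPrecover R f)
    (E : Type u) [AddCommGroup E] [Module R E] (hE : IsInjectiveCogenerator R E)
    (h : IsInjectiveEnvelope R (LinearMap.lcomp R E f)) :
    IsFlatCover R f := by
  refine ⟨hf, fun h₀ hh₀ => ?_⟩
  set f' := LinearMap.lcomp R E f with hf'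
  set h' := LinearMap.lcomp R E h₀ with hh'
  have hfh : ∀ x : F, f (h₀ x) = f x := fun x => LinearMap.ext_iff.mp hh₀ x
  have key : ∀ g : M →ₗ[R] E, h' (f' g) = f' g := by
    intro g; ext x
    simp only [hh', hf', LinearMap.lcomp_apply, LinearMap.coe_comp, Function.comp_apply]
    rw [hfh]
  -- h' is injective
  have hinj : Function.Injective h' := by
    rw [← LinearMap.ker_eq_bot]
    by_contra hne
    apply h.2.2 (LinearMap.ker h') hne
    rw [eq_bot_iff]
    rintro x ⟨hx1, hx2⟩
    obtain ⟨g, rfl⟩ := hx2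
    have : h' (f' g) = 0 := hx1
    rw [key g] at this
    simp [this]
  -- retraction r with r ∘ h' = id, using injectivity of Hom(F,E)
  obtain ⟨r, hr⟩ := h.1.out h' hinj LinearMap.id
  -- h' is surjective
  have hsurj : Function.Surjective h' := by
    intro x
    refine ⟨r x, ?_⟩
    -- let y := h' (r x) - x ; show y = 0 via essentiality on ker (h' ∘ r - id)... direct:
    set e : (F →ₗ[R] E) →ₗ[R] (F →ₗ[R] E) := h' ∘ₗ r with he
    have hefix : ∀ z, e (h' z) = h' z := by
      intro z; simp only [he, LinearMap.comp_apply]; rw [hr z]; simp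
    have hker : LinearMap.ker e = ⊥ := by
      by_contra hne
      apply h.2.2 (LinearMap.ker e) hne
      rw [eq_bot_iff]
      rintro z ⟨hz1, hz2⟩
      obtain ⟨g, rfl⟩ := hz2
      have h1 : e (f' g) = f' g := by
        conv_lhs => rw [← key g]
        rw [hefix, key g]
      have h2 : e (f' g) = 0 := hz1
      rw [h1] at h2
      simp [h2]
    have hy : e x - x ∈ LinearMap.ker e := by
      simp only [LinearMap.mem_ker, map_sub, he, LinearMap.comp_apply]
      rw [hr (r x)]; simp
    rw [hker, Submodule.mem_bot, sub_eq_zero] at hy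
    have := hy
    simpa [he] using this
  constructor
  · -- h₀ injective
    rw [← LinearMap.ker_eq_bot, eq_bot_iff]
    intro x hx
    rw [LinearMap.mem_ker] at hx
    rw [Submodule.mem_bot]
    by_contra hxne
    -- build g : F →ₗ E with g x ≠ 0
    set N := Submodule.span R ({x} : Set F) with hN
    have hxN : x ∈ N := Submodule.subset_span rfl
    obtain ⟨g0, hg0⟩ := hE.2 N ⟨⟨x, hxN⟩, by simp [Subtype.ext_iff, hxne]⟩
    have hg0x : g0 ⟨x, hxN⟩ ≠ 0 := by
      intro hz
      apply hg0
      ext ⟨y, hy⟩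
      obtain ⟨r', hr'⟩ := Submodule.mem_span_singleton.mp hy
      have : (⟨y, hy⟩ : N) = r' • ⟨x, hxN⟩ := by
        ext; simp [← hr']
      rw [this, map_smul, hz, smul_zero]
      rfl
    obtain ⟨g, hg⟩ := hE.1.out N.subtype (Submodule.injective_subtype N) g0
    have hgx : g x ≠ 0 := by
      have := hg ⟨x, hxN⟩
      simpa using this ▸ hg0x
    obtain ⟨g', hg'⟩ := hsurj g
    apply hgx
    have : g' (h₀ x) = g x := by
      rw [← hg']; rfl
    rw [← this, hx, map_zero]
  · -- h₀ surjective
    rw [← LinearMap.range_eq_top]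
    by_contra hne
    set Q := F ⧸ LinearMap.range h₀ with hQ
    have : ∃ q : Q, q ≠ 0 := by
      obtain ⟨m, hm⟩ : ∃ m, m ∉ LinearMap.range h₀ := by
        by_contra hc; push_neg at hc
        exact hne (eq_top_iff.mpr fun y _ => hc y)
      exact ⟨Submodule.Quotient.mk m,
        fun hmz => hm ((Submodule.Quotient.mk_eq_zero _).mp hmz)⟩
    obtain ⟨g, hg⟩ := hE.2 Q this
    have hG0 : h' (g ∘ₗ (LinearMap.range h₀).mkQ) = 0 := by
      ext y
      simp only [hh', LinearMap.lcomp_apply, LinearMap.coe_comp, Function.comp_apply,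
        LinearMap.zero_apply]
      rw [show (LinearMap.range h₀).mkQ (h₀ y) = 0 from
        (Submodule.Quotient.mk_eq_zero _).mpr ⟨y, rfl⟩, map_zero]
    have : g ∘ₗ (LinearMap.range h₀).mkQ = 0 := by
      apply hinj
      rw [hG0, map_zero]
    apply hg
    ext y
    exact LinearMap.ext_iff.mp this y
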